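/- A collectionwise normal space is paracompact if and only if it is weakly paracompact (metacompact). -/

import Mathlib

noncomputable section
open Set Topology TopologicalSpace

/-- `𝒰` is an open cover of `X`. -/
def IsOpenCover {X : Type} [TopologicalSpace X] (𝒰 : Set (Set X)) : Prop :=
  (∀ U ∈ 𝒰, IsOpen U) ∧ ⋃₀ 𝒰 = univ

/-- Star of a point with respect to a family of sets. -/
def ptStar {X : Type} (x : X) (𝒰 : Set (Set X)) : Set X := ⋃₀ {U | U ∈ 𝒰 ∧ x ∈ U}

/-- Star of a set with respect to a family of sets. -/
def setStar {X : Type} (A : Set X) (𝒰 : Set (Set X)) : Set X :=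
  ⋃₀ {U | U ∈ 𝒰 ∧ (U ∩ A).Nonempty}

/-- `𝒱` star-refines `𝒰`. -/
def StarRefines {X : Type} (𝒱 𝒰 : Set (Set X)) : Prop :=
  ∀ x : X, ∃ U ∈ 𝒰, ptStar x 𝒱 ⊆ U

/-- A continuous partition of unity viewed as a map into `l¹(S)` with image in `Δ(S)`. -/
def IsPU {X S : Type} [TopologicalSpace X] (f : X → lp (fun _ : S => ℝ) 1) : Prop :=
  Continuous f ∧ ∀ x : X, (∀ s : S, 0 ≤ f x s) ∧ HasSum (fun s => f x s) 1

/-- The partition of unity `f` is `𝒰`-small: each carrier lies in a member of `𝒰`. -/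
def IsUSmall {X S : Type} [TopologicalSpace X] (𝒰 : Set (Set X))
    (f : X → lp (fun _ : S => ℝ) 1) : Prop :=
  ∀ s : S, ∃ U ∈ 𝒰, {x : X | f x s ≠ 0} ⊆ U

/-- There exists a `𝒰`-small partition of unity on `X`. -/
def ExistsUSmallPU {X : Type} [TopologicalSpace X] (𝒰 : Set (Set X)) : Prop :=
  ∃ (S : Type) (f : X → lp (fun _ : S => ℝ) 1), IsPU f ∧ IsUSmall 𝒰 f

/-- An indexed family of sets is discrete. -/
def DiscreteFam {X S : Type} [TopologicalSpace X] (A : S → Set X) : Prop :=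
  ∀ x : X, ∃ N ∈ nhds x, {s : S | (A s ∩ N).Nonempty}.Subsingleton

/-- A family of sets (as a set of sets) is discrete. -/
def DiscreteSetFam {X : Type} [TopologicalSpace X] (𝒜 : Set (Set X)) : Prop :=
  ∀ x : X, ∃ N ∈ nhds x, {A | A ∈ 𝒜 ∧ (A ∩ N).Nonempty}.Subsingleton

/-- `𝒰` has a σ-discrete closed refinement. -/
def HasSigmaDiscreteClosedRefinement {X : Type} [TopologicalSpace X]
    (𝒰 : Set (Set X)) : Prop :=
  ∃ D : ℕ → Set (Set X), (∀ n, DiscreteSetFam (D n)) ∧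
    (∀ n, ∀ F ∈ D n, IsClosed F) ∧
    (∀ n, ∀ F ∈ D n, ∃ U ∈ 𝒰, F ⊆ U) ∧
    ⋃₀ (⋃ n, D n) = univ

/-- `X` is collectionwise normal. -/
def CwNormal (X : Type) [TopologicalSpace X] : Prop :=
  ∀ (S : Type) (A : S → Set X), (∀ s, IsClosed (A s)) → DiscreteFam A →
    ∃ V : S → Set X, (∀ s, IsOpen (V s)) ∧ (∀ s, A s ⊆ V s) ∧ DiscreteFam V

set_option linter.unusedSectionVars false
namespace MN
attribute [local instance 10] Classical.propDecidable
variable {X S : Type} [TopologicalSpace X]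

lemma discreteFam_mono {A B : S → Set X} (h : DiscreteFam A) (hBA : ∀ s, B s ⊆ A s) :
    DiscreteFam B := by
  intro x
  obtain ⟨N, hN, hsub⟩ := h x
  exact ⟨N, hN, fun s hs t ht => hsub (hs.mono (inter_subset_inter_left _ (hBA s)))
    (ht.mono (inter_subset_inter_left _ (hBA t)))⟩

lemma discreteFam_closure {A : S → Set X} (h : DiscreteFam A) :
    DiscreteFam fun s => closure (A s) := by
  intro x
  obtain ⟨N, hN, hsub⟩ := h x
  obtain ⟨O, hON, hO, hxO⟩ := mem_nhds_iff.mp hN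
  refine ⟨O, hO.mem_nhds hxO, fun s hs t ht => ?_⟩
  have key : ∀ u : S, (closure (A u) ∩ O).Nonempty → (A u ∩ N).Nonempty := by
    intro u ⟨y, hy1, hy2⟩
    obtain ⟨z, hzO, hzA⟩ := mem_closure_iff.mp hy1 O hO hy2
    exact ⟨z, hzA, hON hzO⟩
  exact hsub (key s hs) (key t ht)

lemma isClosed_iUnion_discrete {A : S → Set X} (h : DiscreteFam A)
    (hc : ∀ s, IsClosed (A s)) : IsClosed (⋃ s, A s) := by
  rw [← isOpen_compl_iff]
  rw [isOpen_iff_mem_nhds]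
  intro x hx
  obtain ⟨N, hN, hsub⟩ := h x
  rcases eq_empty_or_nonempty {s : S | (A s ∩ N).Nonempty} with he | ⟨s₀, hs₀⟩
  · filter_upwards [hN] with y hy hmem
    obtain ⟨s, hs⟩ := mem_iUnion.mp hmem
    exact (eq_empty_iff_forall_notMem.mp he s ⟨y, hs, hy⟩).elim
  · have hxs₀ : x ∉ A s₀ := fun hm => (mem_compl_iff _ _).mp hx (mem_iUnion.mpr ⟨s₀, hm⟩)
    filter_upwards [hN, (hc s₀).isOpen_compl.mem_nhds hxs₀] with y hyN hyc hmem
    obtain ⟨s, hs⟩ := mem_iUnion.mp hmem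
    exact hyc ((hsub ⟨y, hs, hyN⟩ hs₀) ▸ hs)

/-- Insertion lemma: a discrete closed family inside a discrete open expansion can be
separated by an intermediate discrete open family whose closures stay inside. -/
lemma insertion (hX : CwNormal X) {D W : S → Set X} (hDc : ∀ s, IsClosed (D s))
    (hDd : DiscreteFam D) (hWo : ∀ s, IsOpen (W s)) (hWd : DiscreteFam W)
    (hDW : ∀ s, D s ⊆ W s) :
    ∃ U : S → Set X, (∀ s, IsOpen (U s)) ∧ (∀ s, D s ⊆ U s) ∧
      (∀ s, closure (U s) ⊆ W s) ∧ DiscreteFam U := by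
  classical
  set Z : Set X := (⋃ s, W s)ᶜ with hZ
  set A : Option S → Set X := fun t => t.elim Z D with hA
  have hAc : ∀ t, IsClosed (A t) := by
    rintro (_ | s)
    · exact (isOpen_iUnion hWo).isClosed_compl
    · exact hDc s
  have hAd : DiscreteFam A := by
    intro x
    obtain ⟨N, hN, hsub⟩ := hDd x
    by_cases hx : x ∈ ⋃ s, W s
    · obtain ⟨s₀, hs₀⟩ := mem_iUnion.mp hx
      refine ⟨N ∩ W s₀, Filter.inter_mem hN ((hWo s₀).mem_nhds hs₀), ?_⟩
      have hsome : {t : Option S | (A t ∩ (N ∩ W s₀)).Nonempty} ⊆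
          some '' {s : S | (D s ∩ N).Nonempty} := by
        rintro (_ | s) ⟨y, hy1, hy2⟩
        · exact (hy1 (mem_iUnion.mpr ⟨s₀, hy2.2⟩)).elim
        · exact ⟨s, ⟨y, hy1, hy2.1⟩, rfl⟩
      exact (hsub.image some).anti hsome
    · rcases eq_empty_or_nonempty {s : S | (D s ∩ N).Nonempty} with he | ⟨s₁, hs₁⟩
      · refine ⟨N, hN, (subsingleton_singleton (a := (none : Option S))).anti ?_⟩
        rintro (_ | s) hs
        · exact rfl
        · exact (eq_empty_iff_forall_notMem.mp he s hs).elim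
      · have hxD : x ∉ D s₁ := fun h => hx (mem_iUnion.mpr ⟨s₁, hDW s₁ h⟩)
        refine ⟨N \ D s₁, Filter.diff_mem hN ((hDc s₁).isOpen_compl.mem_nhds hxD),
          (subsingleton_singleton (a := (none : Option S))).anti ?_⟩
        rintro (_ | s) hs
        · exact rfl
        · obtain ⟨y, hy1, hy2, hy3⟩ := hs
          exact (hy3 ((hsub ⟨y, hy1, hy2⟩ hs₁) ▸ hy1)).elim
  obtain ⟨O, hOo, hAO, hOd⟩ := hX (Option S) A hAc hAd
  refine ⟨fun s => O (some s) ∩ W s, fun s => (hOo _).inter (hWo s),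
    fun s x hx => ⟨hAO (some s) hx, hDW s hx⟩, ?_, ?_⟩
  · intro s y hy
    have hyW : y ∈ ⋃ t, W t := by
      by_contra hyZ
      obtain ⟨N, hN, hsub⟩ := hOd y
      have h1 : (O none ∩ N).Nonempty := ⟨y, hAO none hyZ, mem_of_mem_nhds hN⟩
      obtain ⟨z, hz1, hz2⟩ := mem_closure_iff_nhds.mp hy N hN
      have h2 : (O (some s) ∩ N).Nonempty := ⟨z, hz2.1, hz1⟩
      exact Option.some_ne_none s (hsub h1 h2).symm
    obtain ⟨s', hs'⟩ := mem_iUnion.mp hyW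
    obtain ⟨N, hN, hsub⟩ := hWd y
    obtain ⟨z, hz1, hz2⟩ := mem_closure_iff_nhds.mp hy N hN
    have : s' = s := hsub ⟨y, hs', mem_of_mem_nhds hN⟩ ⟨z, hz2.2, hz1⟩
    exact this ▸ hs'
  · intro x
    obtain ⟨N, hN, hsub⟩ := hOd x
    refine ⟨N, hN, fun s hs t ht => ?_⟩
    have := hsub (hs.mono (inter_subset_inter_left _ inter_subset_left))
      (ht.mono (inter_subset_inter_left _ inter_subset_left))
    exact Option.some_injective _ this


variable (𝒱 : Set (Set X)) (hpf : ∀ x : X, {V | V ∈ 𝒱 ∧ x ∈ V}.Finite)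

def Tx (x : X) : Finset (Set X) := (hpf x).toFinset

lemma mem_Tx {x : X} {V : Set X} : V ∈ Tx 𝒱 hpf x ↔ V ∈ 𝒱 ∧ x ∈ V :=
  Set.Finite.mem_toFinset _

lemma mem_sInter_Tx (x : X) : x ∈ ⋂₀ (↑(Tx 𝒱 hpf x) : Set (Set X)) := by
  intro V hV
  exact ((mem_Tx 𝒱 hpf).mp hV).2

lemma isOpen_sInter_Tx (hop : ∀ V ∈ 𝒱, IsOpen V) (x : X) :
    IsOpen (⋂₀ (↑(Tx 𝒱 hpf x) : Set (Set X))) :=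
  (Tx 𝒱 hpf x).finite_toSet.isOpen_sInter
    (fun V hV => hop V ((mem_Tx 𝒱 hpf).mp hV).1)

lemma Tx_subset {x z : X} (h : z ∈ ⋂₀ (↑(Tx 𝒱 hpf x) : Set (Set X))) :
    Tx 𝒱 hpf x ⊆ Tx 𝒱 hpf z := by
  intro V hV
  exact (mem_Tx 𝒱 hpf).mpr ⟨((mem_Tx 𝒱 hpf).mp hV).1, h V hV⟩

def Cset (F : Finset (Set X)) : Set X := {x | Tx 𝒱 hpf x = F}

def Df (prev : Set X) (n : ℕ) (F : Finset (Set X)) : Set X :=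
  if F.card = n then Cset 𝒱 hpf F \ prev else ∅

lemma mem_Df {prev : Set X} {n : ℕ} {F : Finset (Set X)} {x : X} :
    x ∈ Df 𝒱 hpf prev n F ↔ F.card = n ∧ Tx 𝒱 hpf x = F ∧ x ∉ prev := by
  by_cases h : F.card = n
  · simp [Df, Cset, h]
  · simp [Df, Cset, h]

lemma good (hop : ∀ V ∈ 𝒱, IsOpen V) {prev : Set X} {n : ℕ} (hprev : IsOpen prev)
    (hinv : ∀ x : X, (Tx 𝒱 hpf x).card < n → x ∈ prev) :
    (∀ F, IsClosed (Df 𝒱 hpf prev n F)) ∧ DiscreteFam (Df 𝒱 hpf prev n) := by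
  constructor
  · intro F
    by_cases hc : F.card = n
    case neg => simp only [Df, if_neg hc]; exact isClosed_empty
    rw [← isOpen_compl_iff, isOpen_iff_mem_nhds]
    intro x hx
    by_cases hxp : x ∈ prev
    · filter_upwards [hprev.mem_nhds hxp] with y hy hmem
      exact ((mem_Df 𝒱 hpf).mp hmem).2.2 hy
    · have hcard : n ≤ (Tx 𝒱 hpf x).card := not_lt.mp (fun h => hxp (hinv x h))
      have hne : Tx 𝒱 hpf x ≠ F := fun he => hx ((mem_Df 𝒱 hpf).mpr ⟨hc, he, hxp⟩)
      filter_upwards [(isOpen_sInter_Tx 𝒱 hpf hop x).mem_nhds (mem_sInter_Tx 𝒱 hpf x)]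
        with y hy hmem
      obtain ⟨hcF, hTy, _⟩ := (mem_Df 𝒱 hpf).mp hmem
      have hsub : Tx 𝒱 hpf x ⊆ F := hTy ▸ Tx_subset 𝒱 hpf hy
      exact hne (Finset.eq_of_subset_of_card_le hsub (by omega))
  · intro x
    by_cases hxp : x ∈ prev
    · refine ⟨prev, hprev.mem_nhds hxp, fun F hF F' _ => ?_⟩
      obtain ⟨y, hy1, hy2⟩ := hF
      exact (((mem_Df 𝒱 hpf).mp hy1).2.2 hy2).elim
    · have hcard : n ≤ (Tx 𝒱 hpf x).card := not_lt.mp (fun h => hxp (hinv x h))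
      refine ⟨_, (isOpen_sInter_Tx 𝒱 hpf hop x).mem_nhds (mem_sInter_Tx 𝒱 hpf x),
        fun F hF F' hF' => ?_⟩
      have key : ∀ G : Finset (Set X),
          (Df 𝒱 hpf prev n G ∩ ⋂₀ (↑(Tx 𝒱 hpf x) : Set (Set X))).Nonempty →
          G = Tx 𝒱 hpf x := by
        rintro G ⟨y, hy1, hy2⟩
        obtain ⟨hcG, hTy, _⟩ := (mem_Df 𝒱 hpf).mp hy1
        have hsub : Tx 𝒱 hpf x ⊆ G := hTy ▸ Tx_subset 𝒱 hpf hy2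
        exact (Finset.eq_of_subset_of_card_le hsub (by omega)).symm
      rw [key F hF, key F' hF']

def PickProp (n : ℕ) (prev : Set X)
    (p : (Finset (Set X) → Set X) × (Finset (Set X) → Set X)) : Prop :=
  (∀ F, IsOpen (p.1 F)) ∧ (∀ F, IsOpen (p.2 F)) ∧ DiscreteFam p.1 ∧ DiscreteFam p.2 ∧
  (∀ F, Df 𝒱 hpf prev n F ⊆ p.1 F) ∧ (∀ F, closure (p.1 F) ⊆ p.2 F) ∧
  (∀ F, (p.2 F).Nonempty → F.Nonempty ∧ ↑F ⊆ 𝒱 ∧ p.2 F ⊆ ⋂₀ (↑F : Set (Set X)))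

lemma pick_exists (hX : CwNormal X) (hop : ∀ V ∈ 𝒱, IsOpen V) (hcov : ⋃₀ 𝒱 = univ)
    {n : ℕ} {prev : Set X} (hDc : ∀ F, IsClosed (Df 𝒱 hpf prev n F))
    (hDd : DiscreteFam (Df 𝒱 hpf prev n)) :
    ∃ p, PickProp 𝒱 hpf n prev p := by
  classical
  obtain ⟨V, hVo, hDV, hVd⟩ := hX _ _ hDc hDd
  set W : Finset (Set X) → Set X := fun F =>
    if F.Nonempty ∧ ↑F ⊆ 𝒱 ∧ F.card = n then V F ∩ ⋂₀ (↑F : Set (Set X)) else ∅ with hW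
  have hWeq : ∀ F, F.Nonempty ∧ ↑F ⊆ 𝒱 ∧ F.card = n →
      W F = V F ∩ ⋂₀ (↑F : Set (Set X)) := by
    intro F h
    simp only [hW]
    rw [if_pos h]
  have hWeq' : ∀ F, ¬(F.Nonempty ∧ ↑F ⊆ 𝒱 ∧ F.card = n) → W F = ∅ := by
    intro F h
    simp only [hW]
    rw [if_neg h]
  have hWo : ∀ F, IsOpen (W F) := by
    intro F
    by_cases h : F.Nonempty ∧ ↑F ⊆ 𝒱 ∧ F.card = n
    · rw [hWeq F h]
      exact (hVo F).inter (F.finite_toSet.isOpen_sInter fun U hU => hop U (h.2.1 hU))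
    · rw [hWeq' F h]; exact isOpen_empty
  have hWV : ∀ F, W F ⊆ V F := by
    intro F
    by_cases h : F.Nonempty ∧ ↑F ⊆ 𝒱 ∧ F.card = n
    · rw [hWeq F h]; exact inter_subset_left
    · rw [hWeq' F h]; exact empty_subset _
  have hWd : DiscreteFam W := discreteFam_mono hVd hWV
  have hDW : ∀ F, Df 𝒱 hpf prev n F ⊆ W F := by
    intro F x hx
    obtain ⟨hcF, hTx, hxp⟩ := (mem_Df 𝒱 hpf).mp hx
    have hFne : F.Nonempty := by
      have hxu : x ∈ ⋃₀ 𝒱 := hcov ▸ mem_univ x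
      obtain ⟨U, hU, hxU⟩ := hxu
      exact ⟨U, hTx ▸ (mem_Tx 𝒱 hpf).mpr ⟨hU, hxU⟩⟩
    have hFV : ↑F ⊆ 𝒱 := by
      intro U hU
      exact ((mem_Tx 𝒱 hpf).mp (hTx ▸ hU)).1
    rw [hWeq F ⟨hFne, hFV, hcF⟩]
    exact ⟨hDV F hx, hTx ▸ mem_sInter_Tx 𝒱 hpf x⟩
  obtain ⟨B, hBo, hDB, hBW, hBd⟩ := insertion hX hDc hDd hWo hWd hDW
  obtain ⟨A, hAo, hDA, hAB, hAd⟩ := insertion hX hDc hDd hBo hBd hDB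
  refine ⟨(A, B), hAo, hBo, hAd, hBd, hDA, hAB, ?_⟩
  rintro F ⟨y, hy⟩
  have hyW : y ∈ W F := hBW F (subset_closure hy)
  by_cases h : F.Nonempty ∧ ↑F ⊆ 𝒱 ∧ F.card = n
  · refine ⟨h.1, h.2.1, ?_⟩
    intro z hz
    have hzW : z ∈ W F := hBW F (subset_closure hz)
    rw [hWeq F h] at hzW
    exact hzW.2
  · rw [hWeq' F h] at hyW
    exact hyW.elim

def pick (hX : CwNormal X) (hop : ∀ V ∈ 𝒱, IsOpen V) (hcov : ⋃₀ 𝒱 = univ)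
    (prev : Set X) (n : ℕ) :
    (Finset (Set X) → Set X) × (Finset (Set X) → Set X) :=
  if h : (∀ F, IsClosed (Df 𝒱 hpf prev n F)) ∧ DiscreteFam (Df 𝒱 hpf prev n) then
    (pick_exists 𝒱 hpf hX hop hcov h.1 h.2).choose
  else (fun _ => ∅, fun _ => ∅)

lemma pick_spec (hX : CwNormal X) (hop : ∀ V ∈ 𝒱, IsOpen V) (hcov : ⋃₀ 𝒱 = univ)
    {prev : Set X} {n : ℕ} (h1 : ∀ F, IsClosed (Df 𝒱 hpf prev n F))
    (h2 : DiscreteFam (Df 𝒱 hpf prev n)) :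
    PickProp 𝒱 hpf n prev (pick 𝒱 hpf hX hop hcov prev n) := by
  rw [pick, dif_pos ⟨h1, h2⟩]
  exact Exists.choose_spec _

def g (hX : CwNormal X) (hop : ∀ V ∈ 𝒱, IsOpen V) (hcov : ⋃₀ 𝒱 = univ) :
    ℕ → Set X × ((Finset (Set X) → Set X) × (Finset (Set X) → Set X))
  | 0 => (∅, pick 𝒱 hpf hX hop hcov ∅ 0)
  | n + 1 =>
    let p := g hX hop hcov n
    let prev' := p.1 ∪ ⋃ F, p.2.1 F
    (prev', pick 𝒱 hpf hX hop hcov prev' (n + 1))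

lemma g_spec (hX : CwNormal X) (hop : ∀ V ∈ 𝒱, IsOpen V) (hcov : ⋃₀ 𝒱 = univ) :
    ∀ n, IsOpen (g 𝒱 hpf hX hop hcov n).1 ∧
      (∀ x : X, (Tx 𝒱 hpf x).card < n → x ∈ (g 𝒱 hpf hX hop hcov n).1) ∧
      PickProp 𝒱 hpf n (g 𝒱 hpf hX hop hcov n).1 (g 𝒱 hpf hX hop hcov n).2 := by
  intro n
  induction n with
  | zero =>
    have h1 : (g 𝒱 hpf hX hop hcov 0).1 = ∅ := rfl
    refine ⟨h1 ▸ isOpen_empty, fun x hx => absurd hx (Nat.not_lt_zero _), ?_⟩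
    have hg := good 𝒱 hpf hop (n := 0) (h1 ▸ isOpen_empty)
      (fun x hx => absurd hx (Nat.not_lt_zero _))
    exact pick_spec 𝒱 hpf hX hop hcov hg.1 hg.2
  | succ n ih =>
    obtain ⟨iho, ihinv, ihp⟩ := ih
    have h1 : (g 𝒱 hpf hX hop hcov (n+1)).1 =
        (g 𝒱 hpf hX hop hcov n).1 ∪ ⋃ F, (g 𝒱 hpf hX hop hcov n).2.1 F := rfl
    have h2 : (g 𝒱 hpf hX hop hcov (n+1)).2 =
        pick 𝒱 hpf hX hop hcov (g 𝒱 hpf hX hop hcov (n+1)).1 (n+1) := rfl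
    have hopen : IsOpen (g 𝒱 hpf hX hop hcov (n+1)).1 := by
      rw [h1]
      exact iho.union (isOpen_iUnion fun F => ihp.1 F)
    have hinv : ∀ x : X, (Tx 𝒱 hpf x).card < n + 1 →
        x ∈ (g 𝒱 hpf hX hop hcov (n+1)).1 := by
      intro x hx
      rw [h1]
      rcases Nat.lt_succ_iff_lt_or_eq.mp hx with h | h
      · exact Or.inl (ihinv x h)
      · by_cases hxp : x ∈ (g 𝒱 hpf hX hop hcov n).1
        · exact Or.inl hxp
        · refine Or.inr (mem_iUnion.mpr ⟨Tx 𝒱 hpf x, ?_⟩)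
          exact ihp.2.2.2.2.1 _ ((mem_Df 𝒱 hpf).mpr ⟨h.symm ▸ rfl, rfl, hxp⟩)
    have hg := good 𝒱 hpf hop (n := n + 1) hopen hinv
    refine ⟨hopen, hinv, ?_⟩
    rw [h2]
    exact pick_spec 𝒱 hpf hX hop hcov hg.1 hg.2

end MN

section Final
open MN

lemma paracompact_of_pointFinite {X : Type} [TopologicalSpace X] (hX : CwNormal X)
    (H : ∀ 𝒰 : Set (Set X), IsOpenCover 𝒰 →
      ∃ 𝒱 : Set (Set X), IsOpenCover 𝒱 ∧ (∀ V ∈ 𝒱, ∃ U ∈ 𝒰, V ⊆ U) ∧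
        ∀ x : X, {V | V ∈ 𝒱 ∧ x ∈ V}.Finite) : ParacompactSpace X := by
  classical
  constructor
  intro α u ho hu
  obtain ⟨𝒱, ⟨hop, hcov⟩, href, hpf⟩ := H (range u)
    ⟨by rintro _ ⟨a, rfl⟩; exact ho a, by rwa [sUnion_range]⟩
  set A : ℕ → Finset (Set X) → Set X := fun n => (g 𝒱 hpf hX hop hcov n).2.1 with hA
  set B : ℕ → Finset (Set X) → Set X := fun n => (g 𝒱 hpf hX hop hcov n).2.2 with hB
  set prev : ℕ → Set X := fun n => (g 𝒱 hpf hX hop hcov n).1 with hprev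
  have hspec := g_spec 𝒱 hpf hX hop hcov
  have hAo : ∀ n F, IsOpen (A n F) := fun n F => (hspec n).2.2.1 F
  have hAd : ∀ n, DiscreteFam (A n) := fun n => (hspec n).2.2.2.2.1
  have hBd : ∀ n, DiscreteFam (B n) := fun n => (hspec n).2.2.2.2.2.1
  have hBo : ∀ n F, IsOpen (B n F) := fun n F => (hspec n).2.2.2.1 F
  have hAB : ∀ n F, closure (A n F) ⊆ B n F := fun n F => (hspec n).2.2.2.2.2.2.2.1 F
  have hBsub : ∀ n F, (B n F).Nonempty → F.Nonempty ∧ ↑F ⊆ 𝒱 ∧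
      B n F ⊆ ⋂₀ (↑F : Set (Set X)) := fun n F => (hspec n).2.2.2.2.2.2.2.2 F
  -- every point is in some A n F
  have hprevA : ∀ n, ∀ x ∈ prev n, ∃ k F, x ∈ A k F := by
    intro n
    induction n with
    | zero => intro x hx; exact absurd hx (notMem_empty x)
    | succ n ih =>
      intro x hx
      have : x ∈ prev n ∪ ⋃ F, A n F := hx
      rcases this with h | h
      · exact ih x h
      · obtain ⟨F, hF⟩ := mem_iUnion.mp h
        exact ⟨n, F, hF⟩
  have hcoverA : ∀ x : X, ∃ n F, x ∈ A n F := by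
    intro x
    exact hprevA _ x ((hspec ((Tx 𝒱 hpf x).card + 1)).2.1 x (Nat.lt_succ_self _))
  -- the closed sets M n
  set M : ℕ → Set X := fun n => ⋃ F, closure (A n F) with hM
  have hMc : ∀ n, IsClosed (M n) :=
    fun n => isClosed_iUnion_discrete (discreteFam_closure (hAd n))
      (fun F => isClosed_closure)
  have hexM : ∀ x : X, ∃ n, x ∈ M n := by
    intro x
    obtain ⟨n, F, hx⟩ := hcoverA x
    exact ⟨n, mem_iUnion.mpr ⟨F, subset_closure hx⟩⟩
  -- the refinement
  set Y : ℕ × Finset (Set X) → Set X :=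
    fun q => B q.1 q.2 \ ⋃ k ∈ Iio q.1, M k with hY
  have hYo : ∀ q, IsOpen (Y q) := by
    intro q
    exact (hBo q.1 q.2).sdiff ((finite_Iio q.1).isClosed_biUnion fun k _ => hMc k)
  have hYcov : ∀ x : X, ∃ q, x ∈ Y q := by
    intro x
    set n₀ := Nat.find (hexM x) with hn₀
    obtain ⟨G, hG⟩ := mem_iUnion.mp (Nat.find_spec (hexM x))
    refine ⟨(n₀, G), hAB n₀ G hG, ?_⟩
    intro hmem
    obtain ⟨k, hk, hxk⟩ := mem_iUnion₂.mp hmem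
    exact Nat.find_min (hexM x) hk hxk
  have hYref : ∀ q, (Y q).Nonempty → ∃ a, Y q ⊆ u a := by
    rintro q ⟨y, hy⟩
    obtain ⟨hFne, hFV, hBsub'⟩ := hBsub q.1 q.2 ⟨y, hy.1⟩
    obtain ⟨V, hV⟩ := hFne
    obtain ⟨U, hU, hVU⟩ := href V (hFV hV)
    obtain ⟨a, rfl⟩ := hU
    refine ⟨a, fun z hz => hVU (hBsub' hz.1 V hV)⟩
  have hYlf : ∀ x : X, ∃ N ∈ nhds x, {q | (Y q ∩ N).Nonempty}.Finite := by
    intro x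
    have hex : ∃ n, ∃ F, x ∈ A n F := hcoverA x
    set n₀ := Nat.find hex with hn₀
    obtain ⟨G, hG⟩ := Nat.find_spec hex
    choose Nk hNk hNsub using fun k => hBd k x
    set N : Set X := A n₀ G ∩ ⋂ k ∈ Iic n₀, Nk k with hN
    have hNmem : N ∈ nhds x := by
      refine Filter.inter_mem ((hAo n₀ G).mem_nhds hG) ?_
      exact (Filter.biInter_mem (finite_Iic n₀)).mpr fun k _ => hNk k
    refine ⟨N, hNmem, ?_⟩
    have hsub : {q | (Y q ∩ N).Nonempty} ⊆
        ⋃ n ∈ Iic n₀, {n} ×ˢ {F | (B n F ∩ Nk n).Nonempty} := by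
      rintro ⟨n, F⟩ ⟨y, hy1, hy2⟩
      have hn : n ≤ n₀ := by
        by_contra hgt
        push_neg at hgt
        have hyM : y ∈ M n₀ := mem_iUnion.mpr ⟨G, subset_closure hy2.1⟩
        exact hy1.2 (mem_iUnion₂.mpr ⟨n₀, hgt, hyM⟩)
      refine mem_iUnion₂.mpr ⟨n, hn, ?_⟩
      refine mem_prod.mpr ⟨rfl, ⟨y, hy1.1, ?_⟩⟩
      exact (mem_iInter₂.mp hy2.2) n hn
    refine Set.Finite.subset ?_ hsub
    exact (finite_Iic n₀).biUnion fun n _ =>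
      (finite_singleton n).prod ((hNsub n).finite)
  refine ⟨{q : ℕ × Finset (Set X) // (Y q).Nonempty}, fun b => Y b.1,
    fun b => hYo b.1, ?_, ?_, ?_⟩
  · apply eq_univ_of_forall
    intro x
    obtain ⟨q, hq⟩ := hYcov x
    exact mem_iUnion.mpr ⟨⟨q, ⟨x, hq⟩⟩, hq⟩
  · intro x
    obtain ⟨N, hN, hfin⟩ := hYlf x
    refine ⟨N, hN, ?_⟩
    have : {b : {q : ℕ × Finset (Set X) // (Y q).Nonempty} | (Y b.1 ∩ N).Nonempty} =
        Subtype.val ⁻¹' {q | (Y q ∩ N).Nonempty} := rfl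
    rw [this]
    exact hfin.preimage Subtype.val_injective.injOn
  · rintro ⟨q, hq⟩
    exact hYref q hq

end Final


/-- Michael–Nagami: a collectionwise normal space is paracompact iff it is weakly
paracompact (metacompact). -/
theorem stmt13 (X : Type) [TopologicalSpace X] (hX : CwNormal X) :
    ParacompactSpace X ↔
      ∀ 𝒰 : Set (Set X), IsOpenCover 𝒰 →
        ∃ 𝒱 : Set (Set X), IsOpenCover 𝒱 ∧ (∀ V ∈ 𝒱, ∃ U ∈ 𝒰, V ⊆ U) ∧
          ∀ x : X, {V | V ∈ 𝒱 ∧ x ∈ V}.Finite := by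
  constructor
  · intro hp 𝒰 h𝒰
    obtain ⟨ho𝒰, hc𝒰⟩ := h𝒰
    obtain ⟨β, t, hto, htc, htlf, htref⟩ := ParacompactSpace.locallyFinite_refinement
      (X := X) ↥𝒰 (fun U => (U : Set X)) (fun U => ho𝒰 U U.2)
      (by rw [← sUnion_eq_iUnion]; exact hc𝒰)
    refine ⟨range t, ⟨?_, ?_⟩, ?_, ?_⟩
    · rintro _ ⟨b, rfl⟩; exact hto b
    · rw [sUnion_range]; exact htc
    · rintro _ ⟨b, rfl⟩
      obtain ⟨a, ha⟩ := htref b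
      exact ⟨↑a, a.2, ha⟩
    · intro x
      obtain ⟨N, hN, hfin⟩ := htlf x
      refine (hfin.image t).subset ?_
      rintro V ⟨⟨b, rfl⟩, hxV⟩
      exact mem_image_of_mem t ⟨x, hxV, mem_of_mem_nhds hN⟩
  · intro H
    exact paracompact_of_pointFinite hX H
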